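/- Let α be a type of ground atoms, let A be a finite set of atoms, and let R be a set of full ground rules over α each of whose bodies is nonempty. Then the set of optimal censors for A and R is nonempty, and the intersection of all optimal censors for A and R is itself a censor for A and R (it is a subset of A and satisfies R). -/

import Mathlib

/-- A ground rule: a finite body and a family of finite head images. -/
structure GroundRule (α : Type*) where
  body : Finset α
  heads : Set (Finset α)

/-- A set of atoms `C` satisfies a ground rule `(B, Q)` if `B ⊆ C` implies
that `I ⊆ C` for some `I ∈ Q`. -/
def RuleSat {α : Type*} (C : Set α) (r : GroundRule α) : Prop :=
  ↑r.body ⊆ C → ∃ I ∈ r.heads, ↑I ⊆ C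

/-- `C` satisfies a set of ground rules if it satisfies every rule in it. -/
def SatisfiesSet {α : Type*} (C : Set α) (R : Set (GroundRule α)) : Prop :=
  ∀ r ∈ R, RuleSat C r

/-- A censor for an ambient set `A` and rules `R` is a subset of `A` satisfying `R`. -/
def Censor {α : Type*} (A : Set α) (R : Set (GroundRule α)) (C : Set α) : Prop :=
  C ⊆ A ∧ SatisfiesSet C R

/-- An optimal censor is a censor that is maximal w.r.t. set inclusion. -/
def OptimalCensor {α : Type*} (A : Set α) (R : Set (GroundRule α)) (C : Set α) : Prop :=
  Censor A R C ∧ ∀ C', Censor A R C' → C ⊆ C' → C' = C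

/-- for a finite ambient set and full rules with nonempty bodies,
optimal censors exist and their intersection is a censor. -/
theorem stmt1 {α : Type*} (A : Finset α) (R : Set (GroundRule α))
    (hfull : ∀ r ∈ R, r.heads.Subsingleton)
    (hbody : ∀ r ∈ R, r.body.Nonempty) :
    (∃ C, OptimalCensor (↑A) R C) ∧
      Censor (↑A) R (⋂₀ {C | OptimalCensor (↑A) R C}) := by
  -- the empty set is a censor
  have hempty : Censor (↑A) R (∅ : Set α) := by
    refine ⟨Set.empty_subset _, fun r hr hsub => ?_⟩
    obtain ⟨x, hx⟩ := hbody r hr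
    exact absurd (hsub hx) (Set.notMem_empty x)
  -- the set of censors is finite
  have hfin : {C | Censor (↑A) R C}.Finite := by
    apply Set.Finite.subset (Set.Finite.finite_subsets A.finite_toSet)
    intro C hC
    exact hC.1
  -- existence of an optimal censor
  obtain ⟨C, hC, hmax⟩ := Set.Finite.exists_maximalFor id _ hfin ⟨∅, hempty⟩
  have hopt : OptimalCensor (↑A) R C := by
    refine ⟨hC, fun C' hC' hsub => ?_⟩
    exact Set.Subset.antisymm (hmax hC' hsub) hsub
  refine ⟨⟨C, hopt⟩, ?_, fun r hr hsub => ?_⟩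
  · intro x hx
    exact hopt.1.1 (hx C hopt)
  · -- body ⊆ intersection, so body ⊆ C; full rule gives unique head I
    have hbc : ↑r.body ⊆ C := hsub.trans (Set.sInter_subset_of_mem hopt)
    obtain ⟨I, hI, _⟩ := hopt.1.2 r hr hbc
    refine ⟨I, hI, ?_⟩
    intro x hx
    intro D hD
    have hbd : ↑r.body ⊆ D := hsub.trans (Set.sInter_subset_of_mem hD)
    obtain ⟨I', hI', hID⟩ := hD.1.2 r hr hbd
    have : I' = I := hfull r hr hI' hI
    exact hID (this ▸ hx)
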